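/- For any finite sequences x, y, z of points in a metric space (E, d), any c > 0 and any 1 ≤ p < ∞, the SOSPA distance satisfies the triangle inequality: d_SOSPA^{(c,p)}(x, y) ≤ d_SOSPA^{(c,p)}(x, z) + d_SOSPA^{(c,p)}(z, y). -/

import Mathlib

open scoped BigOperators

/-- A polyline: a finite sequence of points of `E`, given by its length and an
indexing function. -/
def Polyline (E : Type*) : Type _ := Σ n : ℕ, Fin n → E

/-- An ordered assignment set between `{1,…,n}` and `{1,…,m}`: each first index and each
second index appears at most once, and the pairs respect a strictly increasing order. -/
def IsOrderedAssignment {n m : ℕ} (θ : Finset (Fin n × Fin m)) : Prop :=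
  ∀ a ∈ θ, ∀ b ∈ θ, (a.1 < b.1 ↔ a.2 < b.2)

/-- A (not necessarily ordered) assignment set: each first index and each second index
appears at most once. -/
def IsAssignment {n m : ℕ} (θ : Finset (Fin n × Fin m)) : Prop :=
  ∀ a ∈ θ, ∀ b ∈ θ, (a.1 = b.1 ↔ a.2 = b.2)

/-- The assignment cost `C(θ, x, y)` of an assignment set `θ` between polylines `x` and `y`. -/
noncomputable def cost {E : Type*} [MetricSpace E] (c p : ℝ) (x y : Polyline E)
    (θ : Finset (Fin x.1 × Fin y.1)) : ℝ :=
  (∑ ij ∈ θ, dist (x.2 ij.1) (y.2 ij.2) ^ p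
    + c ^ p / 2 * ((x.1 : ℝ) + (y.1 : ℝ) - 2 * (θ.card : ℝ))) ^ (1 / p)

/-- The SOSPA distance: the minimum assignment cost over all ordered assignment sets. -/
noncomputable def dSOSPA {E : Type*} [MetricSpace E] (c p : ℝ) (x y : Polyline E) : ℝ :=
  ⨅ θ : {θ : Finset (Fin x.1 × Fin y.1) // IsOrderedAssignment θ}, cost c p x y θ.1

/-- The normalized SOSPA, valued in `[0,1]`, with the convention that it is `0` when
both polylines are empty. -/
noncomputable def dSOSPAn {E : Type*} [MetricSpace E] (c p : ℝ) (x y : Polyline E) : ℝ :=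
  if x.1 = 0 ∧ y.1 = 0 then 0
  else 2 * dSOSPA c p x y /
    ((c ^ p / 2 * ((x.1 : ℝ) + (y.1 : ℝ))) ^ (1 / p) + dSOSPA c p x y)

/-- The cost of a trace `T` (an ordered assignment set) for the generalized edit distance
with substitution costs `γsub`, deletion costs `γdel`, and insertion costs `γins`. -/
noncomputable def traceCost {n m : ℕ} (γsub : Fin n → Fin m → ℝ) (γdel : Fin n → ℝ)
    (γins : Fin m → ℝ) (T : Finset (Fin n × Fin m)) : ℝ :=
  ∑ ij ∈ T, γsub ij.1 ij.2
    + ∑ i ∈ Finset.univ.filter (fun i => ∀ j, (i, j) ∉ T), γdel i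
    + ∑ j ∈ Finset.univ.filter (fun j => ∀ i, (i, j) ∉ T), γins j

/-- The composition `θ₁ ∘ θ₂` of two assignment sets. -/
def composeAssignment {n k m : ℕ} (θ₁ : Finset (Fin n × Fin k)) (θ₂ : Finset (Fin k × Fin m)) :
    Finset (Fin n × Fin m) :=
  Finset.univ.filter fun im => ∃ j, (im.1, j) ∈ θ₁ ∧ (j, im.2) ∈ θ₂

/-- The cyclic shift `S_s(x)` of a polyline `x`: the `k`-th point of `S_s(x)` is the
`⟨k+s⟩_{|x|}`-th point of `x`. -/
def shift {E : Type*} (s : ℕ) (x : Polyline E) : Polyline E :=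
  ⟨x.1, fun i => x.2 ⟨((i : ℕ) + s) % x.1, Nat.mod_lt _ i.pos⟩⟩

/-- A probabilistic polyline set: a finite indexed family of confidence–polyline pairs,
with confidences in `[0,1]`. -/
structure PPSet (E : Type*) where
  n : ℕ
  r : Fin n → ℝ
  poly : Fin n → Polyline E
  r_nonneg : ∀ i, 0 ≤ r i
  r_le_one : ∀ i, r i ≤ 1

/-- `R_X`, the total confidence of a probabilistic polyline set. -/
noncomputable def totalR {E : Type*} (X : PPSet E) : ℝ := ∑ i, X.r i

/-- The DAP distance `d_PLD^{(c,p)}` between two probabilistic polyline sets. -/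
noncomputable def dPLD {E : Type*} [MetricSpace E] (c p : ℝ) (X Y : PPSet E) : ℝ :=
  (⨅ θ : {θ : Finset (Fin X.n × Fin Y.n) // IsAssignment θ},
    (∑ ij ∈ θ.1, (min (X.r ij.1) (Y.r ij.2) * dSOSPAn c p (X.poly ij.1) (Y.poly ij.2) ^ p
        + |X.r ij.1 - Y.r ij.2| / 2)
      + (∑ i ∈ Finset.univ.filter (fun i => ∀ j, (i, j) ∉ θ.1), X.r i
          + ∑ j ∈ Finset.univ.filter (fun j => ∀ i, (i, j) ∉ θ.1), Y.r j) / 2)) ^ (1 / p)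

/-- The DAP similarity (for `p = 1`). -/
noncomputable def SPLD {E : Type*} [MetricSpace E] (c : ℝ) (X Y : PPSet E) : ℝ :=
  ((totalR X + totalR Y) / 2 - dPLD c 1 X Y) / 2

/-- The normalized DAP, with the convention that it equals `0` when the denominator is `0`. -/
noncomputable def dPLDn {E : Type*} [MetricSpace E] (c p : ℝ) (X Y : PPSet E) : ℝ :=
  if ((totalR X + totalR Y) / 2) ^ (1 / p) + dPLD c p X Y = 0 then 0
  else 2 * dPLD c p X Y / (((totalR X + totalR Y) / 2) ^ (1 / p) + dPLD c p X Y)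

/-- The multiset of confidence–polyline pairs of a probabilistic polyline set. -/
def PPSet.toMultiset {E : Type*} (X : PPSet E) : Multiset (ℝ × Polyline E) :=
  Finset.univ.val.map fun i => (X.r i, X.poly i)
lemma IsOrderedAssignment.right_unique' {n m : ℕ} {θ : Finset (Fin n × Fin m)}
    (h : IsOrderedAssignment θ) {i : Fin n} {j j' : Fin m}
    (h1 : (i, j) ∈ θ) (h2 : (i, j') ∈ θ) : j = j' := by
  have H1 := h _ h1 _ h2
  have H2 := h _ h2 _ h1
  simp only at H1 H2
  have hA : ¬ j < j' := fun hlt => lt_irrefl i (H1.2 hlt)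
  have hB : ¬ j' < j := fun hlt => lt_irrefl i (H2.2 hlt)
  exact le_antisymm (not_lt.1 hB) (not_lt.1 hA)

lemma IsOrderedAssignment.left_unique' {n m : ℕ} {θ : Finset (Fin n × Fin m)}
    (h : IsOrderedAssignment θ) {i i' : Fin n} {j : Fin m}
    (h1 : (i, j) ∈ θ) (h2 : (i', j) ∈ θ) : i = i' := by
  have H1 := h _ h1 _ h2
  have H2 := h _ h2 _ h1
  simp only at H1 H2
  have hA : ¬ i < i' := fun hlt => lt_irrefl j (H1.1 hlt)
  have hB : ¬ i' < i := fun hlt => lt_irrefl j (H2.1 hlt)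
  exact le_antisymm (not_lt.1 hB) (not_lt.1 hA)

lemma mem_composeAssignment {n k m : ℕ} {θ₁ : Finset (Fin n × Fin k)}
    {θ₂ : Finset (Fin k × Fin m)} {i : Fin n} {l : Fin m} :
    (i, l) ∈ composeAssignment θ₁ θ₂ ↔ ∃ j, (i, j) ∈ θ₁ ∧ (j, l) ∈ θ₂ := by
  simp [composeAssignment]

lemma composeAssignment_ordered {n k m : ℕ} {θ₁ : Finset (Fin n × Fin k)}
    {θ₂ : Finset (Fin k × Fin m)} (h₁ : IsOrderedAssignment θ₁)
    (h₂ : IsOrderedAssignment θ₂) : IsOrderedAssignment (composeAssignment θ₁ θ₂) := by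
  rintro ⟨i, l⟩ ha ⟨i', l'⟩ hb
  obtain ⟨j, hj1, hj2⟩ := mem_composeAssignment.1 ha
  obtain ⟨j', hj1', hj2'⟩ := mem_composeAssignment.1 hb
  have H1 := h₁ _ hj1 _ hj1'
  have H2 := h₂ _ hj2 _ hj2'
  simpa using H1.trans H2

/-- Sum of a `dite` over the first coordinate of a right-unique relation. -/
lemma sum_dite_fst {n k : ℕ} (θ' : Finset (Fin n × Fin k))
    (hθ : ∀ {i : Fin n} {j j' : Fin k}, (i, j) ∈ θ' → (i, j') ∈ θ' → j = j')
    (F : Fin n → Fin k → ℝ) (e : ℝ) :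
    ∑ i : Fin n, (if h : ∃ j, (i, j) ∈ θ' then F i h.choose else e)
      = ∑ ij ∈ θ', F ij.1 ij.2 + ((n : ℝ) - θ'.card) * e := by
  classical
  set M := θ'.image Prod.fst with hMdef
  have hinj : ∀ a ∈ θ', ∀ b ∈ θ', a.1 = b.1 → a = b := by
    rintro ⟨i, j⟩ ha ⟨i', j'⟩ hb h
    simp only at h
    subst h
    exact Prod.ext rfl (hθ ha hb)
  have hcardM : M.card = θ'.card := Finset.card_image_of_injOn fun a ha b hb h => hinj a ha b hb h
  have hMn : M.card ≤ n := by
    simpa using Finset.card_le_card (Finset.subset_univ M)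
  have hsplit := Finset.sum_sdiff (f := fun i : Fin n =>
      if h : ∃ j, (i, j) ∈ θ' then F i h.choose else e) (Finset.subset_univ M)
  have hM1 : ∑ i ∈ M, (if h : ∃ j, (i, j) ∈ θ' then F i h.choose else e)
      = ∑ ij ∈ θ', F ij.1 ij.2 := by
    rw [hMdef, Finset.sum_image hinj]
    refine Finset.sum_congr rfl ?_
    rintro ⟨i, j⟩ hij
    have hex : ∃ j', (i, j') ∈ θ' := ⟨j, hij⟩
    rw [dif_pos hex]
    exact congrArg (F i) (hθ hex.choose_spec hij)
  have hM2 : ∑ i ∈ Finset.univ \ M, (if h : ∃ j, (i, j) ∈ θ' then F i h.choose else e)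
      = ((n : ℝ) - θ'.card) * e := by
    have : ∀ i ∈ Finset.univ \ M, (if h : ∃ j, (i, j) ∈ θ' then F i h.choose else e) = e := by
      intro i hi
      rw [Finset.mem_sdiff] at hi
      refine dif_neg ?_
      rintro ⟨j, hj⟩
      exact hi.2 (Finset.mem_image.2 ⟨(i, j), hj, rfl⟩)
    rw [Finset.sum_congr rfl this, Finset.sum_const, Finset.card_sdiff_of_subset (Finset.subset_univ M)]
    simp only [Finset.card_univ, Fintype.card_fin, nsmul_eq_mul]
    rw [Nat.cast_sub hMn, hcardM]
  calc ∑ i : Fin n, (if h : ∃ j, (i, j) ∈ θ' then F i h.choose else e)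
      = ∑ i ∈ Finset.univ \ M, (if h : ∃ j, (i, j) ∈ θ' then F i h.choose else e)
        + ∑ i ∈ M, (if h : ∃ j, (i, j) ∈ θ' then F i h.choose else e) := hsplit.symm
    _ = ∑ ij ∈ θ', F ij.1 ij.2 + ((n : ℝ) - θ'.card) * e := by rw [hM1, hM2]; ring

/-- Sum of a `dite` over the second coordinate of a left-unique relation. -/
lemma sum_dite_snd {n k : ℕ} (θ' : Finset (Fin n × Fin k))
    (hθ : ∀ {i i' : Fin n} {j : Fin k}, (i, j) ∈ θ' → (i', j) ∈ θ' → i = i')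
    (F : Fin n → Fin k → ℝ) (e : ℝ) :
    ∑ j : Fin k, (if h : ∃ i, (i, j) ∈ θ' then F h.choose j else e)
      = ∑ ij ∈ θ', F ij.1 ij.2 + ((k : ℝ) - θ'.card) * e := by
  classical
  set M := θ'.image Prod.snd with hMdef
  have hinj : ∀ a ∈ θ', ∀ b ∈ θ', a.2 = b.2 → a = b := by
    rintro ⟨i, j⟩ ha ⟨i', j'⟩ hb h
    simp only at h
    subst h
    exact Prod.ext (hθ ha hb) rfl
  have hcardM : M.card = θ'.card := Finset.card_image_of_injOn fun a ha b hb h => hinj a ha b hb h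
  have hMn : M.card ≤ k := by
    simpa using Finset.card_le_card (Finset.subset_univ M)
  have hsplit := Finset.sum_sdiff (f := fun j : Fin k =>
      if h : ∃ i, (i, j) ∈ θ' then F h.choose j else e) (Finset.subset_univ M)
  have hM1 : ∑ j ∈ M, (if h : ∃ i, (i, j) ∈ θ' then F h.choose j else e)
      = ∑ ij ∈ θ', F ij.1 ij.2 := by
    rw [hMdef, Finset.sum_image hinj]
    refine Finset.sum_congr rfl ?_
    rintro ⟨i, j⟩ hij
    have hex : ∃ i', (i', j) ∈ θ' := ⟨i, hij⟩
    rw [dif_pos hex]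
    exact congrArg (fun i' => F i' j) (hθ hex.choose_spec hij)
  have hM2 : ∑ j ∈ Finset.univ \ M, (if h : ∃ i, (i, j) ∈ θ' then F h.choose j else e)
      = ((k : ℝ) - θ'.card) * e := by
    have : ∀ j ∈ Finset.univ \ M, (if h : ∃ i, (i, j) ∈ θ' then F h.choose j else e) = e := by
      intro j hj
      rw [Finset.mem_sdiff] at hj
      refine dif_neg ?_
      rintro ⟨i, hi⟩
      exact hj.2 (Finset.mem_image.2 ⟨(i, j), hi, rfl⟩)
    rw [Finset.sum_congr rfl this, Finset.sum_const, Finset.card_sdiff_of_subset (Finset.subset_univ M)]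
    simp only [Finset.card_univ, Fintype.card_fin, nsmul_eq_mul]
    rw [Nat.cast_sub hMn, hcardM]
  calc ∑ j : Fin k, (if h : ∃ i, (i, j) ∈ θ' then F h.choose j else e)
      = ∑ j ∈ Finset.univ \ M, (if h : ∃ i, (i, j) ∈ θ' then F h.choose j else e)
        + ∑ j ∈ M, (if h : ∃ i, (i, j) ∈ θ' then F h.choose j else e) := hsplit.symm
    _ = ∑ ij ∈ θ', F ij.1 ij.2 + ((k : ℝ) - θ'.card) * e := by rw [hM1, hM2]; ring

lemma sum_dite_const_snd {n k : ℕ} (θ' : Finset (Fin n × Fin k))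
    (hθ : ∀ {i i' : Fin n} {j : Fin k}, (i, j) ∈ θ' → (i', j) ∈ θ' → i = i') (e : ℝ) :
    ∑ j : Fin k, (if _ : ∃ i, (i, j) ∈ θ' then (0:ℝ) else e) = ((k : ℝ) - θ'.card) * e := by
  have h := sum_dite_snd θ' hθ (fun _ _ => (0:ℝ)) e
  simpa using h


lemma cost_compose_le {E : Type*} [MetricSpace E] (c p : ℝ) (hc : 0 < c) (hp : 1 ≤ p)
    (x z y : Polyline E) (θ₁ : Finset (Fin x.1 × Fin z.1)) (θ₂ : Finset (Fin z.1 × Fin y.1))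
    (h₁ : IsOrderedAssignment θ₁) (h₂ : IsOrderedAssignment θ₂) :
    cost c p x y (composeAssignment θ₁ θ₂) ≤ cost c p x z θ₁ + cost c p z y θ₂ := by
  classical
  have hp0 : (0:ℝ) < p := lt_of_lt_of_le one_pos hp
  set θ := composeAssignment θ₁ θ₂ with hθdef
  have hθord : IsOrderedAssignment θ := composeAssignment_ordered h₁ h₂
  set e : ℝ := (c ^ p / 2) ^ (1/p) with hedef
  have hcp : (0:ℝ) ≤ c ^ p / 2 := by positivity
  have he : 0 ≤ e := Real.rpow_nonneg hcp _
  have hep : e ^ p = c ^ p / 2 := by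
    rw [hedef, ← Real.rpow_mul hcp, one_div_mul_cancel hp0.ne', Real.rpow_one]
  have hep0 : (0:ℝ) ≤ e ^ p := Real.rpow_nonneg he _
  -- the three vectors
  set t : Fin x.1 ⊕ Fin y.1 → ℝ := Sum.elim
    (fun i => if h : ∃ k, (i, k) ∈ θ then dist (x.2 i) (y.2 h.choose) else e)
    (fun k => if _ : ∃ i, (i, k) ∈ θ then 0 else e) with htdef
  set a : Fin x.1 ⊕ Fin y.1 → ℝ := Sum.elim
    (fun i => if h : ∃ j, (i, j) ∈ θ₁ then dist (x.2 i) (z.2 h.choose) else e)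
    (fun k => if (∃ j, (j, k) ∈ θ₂ ∧ ∀ i, (i, j) ∉ θ₁) then e else 0) with hadef
  set b : Fin x.1 ⊕ Fin y.1 → ℝ := Sum.elim
    (fun i => if h : ∃ j, (i, j) ∈ θ₁ then
        (if h' : ∃ k, (h.choose, k) ∈ θ₂ then dist (z.2 h.choose) (y.2 h'.choose) else e)
      else 0)
    (fun k => if _ : ∃ j, (j, k) ∈ θ₂ then 0 else e) with hbdef
  have ht0 : ∀ i, 0 ≤ t i := by
    rintro (i | k) <;> simp only [htdef, Sum.elim_inl, Sum.elim_inr] <;> split_ifs <;>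
      first | exact dist_nonneg | exact he | exact le_rfl
  have ha0 : ∀ i, 0 ≤ a i := by
    rintro (i | k) <;> simp only [hadef, Sum.elim_inl, Sum.elim_inr] <;> split_ifs <;>
      first | exact dist_nonneg | exact he | exact le_rfl
  have hb0 : ∀ i, 0 ≤ b i := by
    rintro (i | k) <;> simp only [hbdef, Sum.elim_inl, Sum.elim_inr] <;> split_ifs <;>
      first | exact dist_nonneg | exact he | exact le_rfl
  -- pointwise triangle bound
  have hab : ∀ i, t i ≤ a i + b i := by
    rintro (i | k)
    · simp only [htdef, hadef, hbdef, Sum.elim_inl]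
      by_cases h1 : ∃ j, (i, j) ∈ θ₁
      · rw [dif_pos h1, dif_pos h1]
        by_cases h2 : ∃ k, (h1.choose, k) ∈ θ₂
        · rw [dif_pos h2]
          have hθmem : (i, h2.choose) ∈ θ :=
            mem_composeAssignment.2 ⟨h1.choose, h1.choose_spec, h2.choose_spec⟩
          have hex : ∃ k, (i, k) ∈ θ := ⟨_, hθmem⟩
          rw [dif_pos hex, hθord.right_unique' hex.choose_spec hθmem]
          exact dist_triangle _ _ _
        · rw [dif_neg h2]
          have hnex : ¬ ∃ k, (i, k) ∈ θ := by
            rintro ⟨k, hk⟩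
            obtain ⟨j, hj1, hj2⟩ := mem_composeAssignment.1 hk
            exact h2 ⟨k, (h₁.right_unique' h1.choose_spec hj1) ▸ hj2⟩
          rw [dif_neg hnex]
          exact le_add_of_nonneg_left dist_nonneg
      · rw [dif_neg h1, dif_neg h1]
        have hnex : ¬ ∃ k, (i, k) ∈ θ := by
          rintro ⟨k, hk⟩
          obtain ⟨j, hj1, _⟩ := mem_composeAssignment.1 hk
          exact h1 ⟨j, hj1⟩
        rw [dif_neg hnex]
        simp
    · simp only [htdef, hadef, hbdef, Sum.elim_inr]
      by_cases h2 : ∃ j, (j, k) ∈ θ₂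
      · rw [dif_pos h2]
        by_cases h3 : ∃ i, (i, h2.choose) ∈ θ₁
        · have hθmem : (h3.choose, k) ∈ θ :=
            mem_composeAssignment.2 ⟨h2.choose, h3.choose_spec, h2.choose_spec⟩
          have hex : ∃ i, (i, k) ∈ θ := ⟨_, hθmem⟩
          rw [dif_pos hex]
          have : (0:ℝ) ≤ (if (∃ j, (j, k) ∈ θ₂ ∧ ∀ i, (i, j) ∉ θ₁) then e else 0) := by
            split_ifs <;> first | exact he | exact le_rfl
          linarith
        · push_neg at h3
          have hP : ∃ j, (j, k) ∈ θ₂ ∧ ∀ i, (i, j) ∉ θ₁ := ⟨h2.choose, h2.choose_spec, h3⟩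
          rw [if_pos hP]
          have ht' : (if _ : ∃ i, (i, k) ∈ θ then (0:ℝ) else e) ≤ e := by
            split_ifs <;> first | exact he | exact le_rfl
          linarith
      · rw [dif_neg h2]
        have hnex : ¬ ∃ i, (i, k) ∈ θ := by
          rintro ⟨i, hi⟩
          obtain ⟨j, _, hj2⟩ := mem_composeAssignment.1 hi
          exact h2 ⟨j, hj2⟩
        rw [dif_neg hnex]
        have : (0:ℝ) ≤ (if (∃ j, (j, k) ∈ θ₂ ∧ ∀ i, (i, j) ∉ θ₁) then e else 0) := by
          split_ifs <;> first | exact he | exact le_rfl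
        linarith
  -- sum of t ^ p
  have hTt : ∑ i, (t i) ^ p
      = ∑ ij ∈ θ, dist (x.2 ij.1) (y.2 ij.2) ^ p
        + c ^ p / 2 * ((x.1 : ℝ) + (y.1 : ℝ) - 2 * (θ.card : ℝ)) := by
    rw [Fintype.sum_sum_type]
    have e1 : ∀ i : Fin x.1, (t (Sum.inl i)) ^ p
        = if h : ∃ k, (i, k) ∈ θ then dist (x.2 i) (y.2 h.choose) ^ p else e ^ p := by
      intro i
      simp only [htdef, Sum.elim_inl]
      split_ifs <;> rfl
    have e2 : ∀ k : Fin y.1, (t (Sum.inr k)) ^ p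
        = if _ : ∃ i, (i, k) ∈ θ then (0:ℝ) else e ^ p := by
      intro k
      simp only [htdef, Sum.elim_inr]
      split_ifs
      · exact Real.zero_rpow hp0.ne'
      · rfl
    rw [Finset.sum_congr rfl (fun i _ => e1 i), Finset.sum_congr rfl (fun k _ => e2 k)]
    rw [sum_dite_fst θ (fun h h' => hθord.right_unique' h h')
        (fun i k => dist (x.2 i) (y.2 k) ^ p) (e ^ p),
      sum_dite_const_snd θ (fun h h' => hθord.left_unique' h h') (e ^ p), hep]
    ring
  -- sum of a ^ p
  have hSa : ∑ i, (a i) ^ p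
      ≤ ∑ ij ∈ θ₁, dist (x.2 ij.1) (z.2 ij.2) ^ p
        + c ^ p / 2 * ((x.1 : ℝ) + (z.1 : ℝ) - 2 * (θ₁.card : ℝ)) := by
    rw [Fintype.sum_sum_type]
    have e1 : ∀ i : Fin x.1, (a (Sum.inl i)) ^ p
        = if h : ∃ j, (i, j) ∈ θ₁ then dist (x.2 i) (z.2 h.choose) ^ p else e ^ p := by
      intro i
      simp only [hadef, Sum.elim_inl]
      split_ifs <;> rfl
    have e2 : ∀ k : Fin y.1, (a (Sum.inr k)) ^ p
        = if (∃ j, (j, k) ∈ θ₂ ∧ ∀ i, (i, j) ∉ θ₁) then e ^ p else 0 := by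
      intro k
      simp only [hadef, Sum.elim_inr]
      split_ifs
      · rfl
      · exact Real.zero_rpow hp0.ne'
    rw [Finset.sum_congr rfl (fun i _ => e1 i), Finset.sum_congr rfl (fun k _ => e2 k)]
    rw [sum_dite_fst θ₁ (fun h h' => h₁.right_unique' h h')
        (fun i j => dist (x.2 i) (z.2 j) ^ p) (e ^ p)]
    -- bound the second sum by a cardinality estimate
    have hsum2 : ∑ k : Fin y.1, (if (∃ j, (j, k) ∈ θ₂ ∧ ∀ i, (i, j) ∉ θ₁) then e ^ p else 0)
        ≤ ((z.1 : ℝ) - θ₁.card) * e ^ p := by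
      classical
      rw [Finset.sum_ite, Finset.sum_const, Finset.sum_const_zero, add_zero, nsmul_eq_mul]
      set N₁ := θ₁.image Prod.snd with hN₁
      set θ₂' := θ₂.filter (fun jk => ∀ i, (i, jk.1) ∉ θ₁) with hθ₂'
      have hTeq : Finset.univ.filter (fun k : Fin y.1 => ∃ j, (j, k) ∈ θ₂ ∧ ∀ i, (i, j) ∉ θ₁)
          = θ₂'.image Prod.snd := by
        ext k
        simp only [Finset.mem_filter, Finset.mem_univ, true_and, Finset.mem_image, hθ₂']
        constructor
        · rintro ⟨j, hj, hji⟩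
          exact ⟨(j, k), ⟨hj, hji⟩, rfl⟩
        · rintro ⟨⟨j, k'⟩, hjk, rfl⟩
          exact ⟨j, hjk.1, hjk.2⟩
      have hcard1 : (θ₂'.image Prod.snd).card = θ₂'.card := Finset.card_image_of_injOn (by
        rintro ⟨j, k⟩ hjk ⟨j', k'⟩ hjk' h
        simp only at h
        subst h
        rw [hθ₂', Finset.mem_coe, Finset.mem_filter] at hjk hjk'
        exact Prod.ext (h₂.left_unique' hjk.1 hjk'.1) rfl)
      have hcard2 : θ₂'.card = (θ₂'.image Prod.fst).card := (Finset.card_image_of_injOn (by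
        rintro ⟨j, k⟩ hjk ⟨j', k'⟩ hjk' h
        simp only at h
        subst h
        rw [hθ₂', Finset.mem_coe, Finset.mem_filter] at hjk hjk'
        exact Prod.ext rfl (h₂.right_unique' hjk.1 hjk'.1))).symm
      have hsub : θ₂'.image Prod.fst ⊆ Finset.univ \ N₁ := by
        intro j hj
        rw [Finset.mem_image] at hj
        obtain ⟨⟨j', k⟩, hjk, rfl⟩ := hj
        rw [hθ₂', Finset.mem_filter] at hjk
        rw [Finset.mem_sdiff]
        refine ⟨Finset.mem_univ _, ?_⟩
        rw [hN₁, Finset.mem_image]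
        rintro ⟨⟨i, j''⟩, hij, h⟩
        exact hjk.2 i (h ▸ hij)
      have hNcard : N₁.card = θ₁.card := Finset.card_image_of_injOn (by
        rintro ⟨i, j⟩ hij ⟨i', j'⟩ hij' h
        simp only at h
        subst h
        exact Prod.ext (h₁.left_unique' hij hij') rfl)
      have hNle : N₁.card ≤ z.1 := by
        simpa using Finset.card_le_card (Finset.subset_univ N₁)
      have hfinal : (Finset.univ.filter
          (fun k : Fin y.1 => ∃ j, (j, k) ∈ θ₂ ∧ ∀ i, (i, j) ∉ θ₁)).card ≤ z.1 - θ₁.card := by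
        rw [hTeq, hcard1, hcard2]
        calc (θ₂'.image Prod.fst).card ≤ (Finset.univ \ N₁).card := Finset.card_le_card hsub
          _ = z.1 - θ₁.card := by
              rw [Finset.card_sdiff_of_subset (Finset.subset_univ N₁), hNcard]
              simp
      have hcast : ((Finset.univ.filter
          (fun k : Fin y.1 => ∃ j, (j, k) ∈ θ₂ ∧ ∀ i, (i, j) ∉ θ₁)).card : ℝ)
          ≤ (z.1 : ℝ) - θ₁.card := by
        have h1 := hfinal
        have h2 : θ₁.card ≤ z.1 := hNcard ▸ hNle
        push_cast [Nat.cast_sub h2] at h1 ⊢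
        exact_mod_cast h1
      exact mul_le_mul_of_nonneg_right hcast hep0
    have := add_le_add_right hsum2 (∑ ij ∈ θ₁, dist (x.2 ij.1) (z.2 ij.2) ^ p
      + ((x.1 : ℝ) - θ₁.card) * e ^ p)
    calc ∑ ij ∈ θ₁, dist (x.2 ij.1) (z.2 ij.2) ^ p + ((x.1 : ℝ) - θ₁.card) * e ^ p
          + ∑ k : Fin y.1, (if (∃ j, (j, k) ∈ θ₂ ∧ ∀ i, (i, j) ∉ θ₁) then e ^ p else 0)
        ≤ ∑ ij ∈ θ₁, dist (x.2 ij.1) (z.2 ij.2) ^ p + ((x.1 : ℝ) - θ₁.card) * e ^ p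
          + ((z.1 : ℝ) - θ₁.card) * e ^ p := this
      _ = ∑ ij ∈ θ₁, dist (x.2 ij.1) (z.2 ij.2) ^ p
          + c ^ p / 2 * ((x.1 : ℝ) + (z.1 : ℝ) - 2 * (θ₁.card : ℝ)) := by rw [← hep]; ring
  -- sum of b ^ p
  set G : Fin z.1 → ℝ := fun j =>
    if h' : ∃ k, (j, k) ∈ θ₂ then dist (z.2 j) (y.2 h'.choose) ^ p else e ^ p with hGdef
  have hG0 : ∀ j, 0 ≤ G j := by
    intro j
    simp only [hGdef]
    split_ifs
    · exact Real.rpow_nonneg dist_nonneg _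
    · exact hep0
  have hSb : ∑ i, (b i) ^ p
      ≤ ∑ ij ∈ θ₂, dist (z.2 ij.1) (y.2 ij.2) ^ p
        + c ^ p / 2 * ((z.1 : ℝ) + (y.1 : ℝ) - 2 * (θ₂.card : ℝ)) := by
    rw [Fintype.sum_sum_type]
    have e1 : ∀ i : Fin x.1, (b (Sum.inl i)) ^ p
        = if h : ∃ j, (i, j) ∈ θ₁ then G h.choose else 0 := by
      intro i
      simp only [hbdef, Sum.elim_inl, hGdef]
      by_cases h : ∃ j, (i, j) ∈ θ₁
      · rw [dif_pos h, dif_pos h]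
        by_cases h' : ∃ k, (h.choose, k) ∈ θ₂
        · rw [dif_pos h', dif_pos h']
        · rw [dif_neg h', dif_neg h']
      · rw [dif_neg h, dif_neg h]
        exact Real.zero_rpow hp0.ne'
    have e2 : ∀ k : Fin y.1, (b (Sum.inr k)) ^ p
        = if _ : ∃ j, (j, k) ∈ θ₂ then (0:ℝ) else e ^ p := by
      intro k
      simp only [hbdef, Sum.elim_inr]
      split_ifs
      · exact Real.zero_rpow hp0.ne'
      · rfl
    rw [Finset.sum_congr rfl (fun i _ => e1 i), Finset.sum_congr rfl (fun k _ => e2 k)]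
    rw [sum_dite_fst θ₁ (fun h h' => h₁.right_unique' h h') (fun _ j => G j) 0,
      sum_dite_const_snd θ₂ (fun h h' => h₂.left_unique' h h') (e ^ p)]
    have hinj : ∀ a ∈ θ₁, ∀ b ∈ θ₁, a.2 = b.2 → a = b := by
      rintro ⟨i, j⟩ hij ⟨i', j'⟩ hij' h
      simp only at h
      subst h
      exact Prod.ext (h₁.left_unique' hij hij') rfl
    have him : ∑ ij ∈ θ₁, G ij.2 = ∑ j ∈ θ₁.image Prod.snd, G j :=
      (Finset.sum_image hinj).symm
    have hle : ∑ j ∈ θ₁.image Prod.snd, G j ≤ ∑ j : Fin z.1, G j :=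
      Finset.sum_le_sum_of_subset_of_nonneg (Finset.subset_univ _) (fun j _ _ => hG0 j)
    have hGsum : ∑ j : Fin z.1, G j
        = ∑ ij ∈ θ₂, dist (z.2 ij.1) (y.2 ij.2) ^ p + ((z.1 : ℝ) - θ₂.card) * e ^ p := by
      rw [hGdef]
      exact sum_dite_fst θ₂ (fun h h' => h₂.right_unique' h h')
        (fun j k => dist (z.2 j) (y.2 k) ^ p) (e ^ p)
    have : ∑ ij ∈ θ₁, G ij.2
        ≤ ∑ ij ∈ θ₂, dist (z.2 ij.1) (y.2 ij.2) ^ p + ((z.1 : ℝ) - θ₂.card) * e ^ p := by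
      rw [him, ← hGsum] at *
      exact hle
    calc ∑ ij ∈ θ₁, G ij.2 + ((x.1 : ℝ) - θ₁.card) * 0 + ((y.1 : ℝ) - θ₂.card) * e ^ p
        ≤ ∑ ij ∈ θ₂, dist (z.2 ij.1) (y.2 ij.2) ^ p + ((z.1 : ℝ) - θ₂.card) * e ^ p
          + ((y.1 : ℝ) - θ₂.card) * e ^ p := by linarith
      _ = ∑ ij ∈ θ₂, dist (z.2 ij.1) (y.2 ij.2) ^ p
          + c ^ p / 2 * ((z.1 : ℝ) + (y.1 : ℝ) - 2 * (θ₂.card : ℝ)) := by rw [← hep]; ring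
  -- assemble
  have htp0 : (0:ℝ) ≤ ∑ i, (t i) ^ p :=
    Finset.sum_nonneg fun i _ => Real.rpow_nonneg (ht0 i) p
  have hap0 : (0:ℝ) ≤ ∑ i, (a i) ^ p :=
    Finset.sum_nonneg fun i _ => Real.rpow_nonneg (ha0 i) p
  have hbp0 : (0:ℝ) ≤ ∑ i, (b i) ^ p :=
    Finset.sum_nonneg fun i _ => Real.rpow_nonneg (hb0 i) p
  have hinv0 : (0:ℝ) ≤ 1 / p := by positivity
  calc cost c p x y θ = (∑ i, (t i) ^ p) ^ (1/p) := by rw [cost, hTt]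
    _ ≤ (∑ i, (a i + b i) ^ p) ^ (1/p) :=
        Real.rpow_le_rpow htp0
          (Finset.sum_le_sum fun i _ => Real.rpow_le_rpow (ht0 i) (hab i) hp0.le) hinv0
    _ ≤ (∑ i, (a i) ^ p) ^ (1/p) + (∑ i, (b i) ^ p) ^ (1/p) :=
        Real.Lp_add_le_of_nonneg (s := Finset.univ) hp (fun i _ => ha0 i) (fun i _ => hb0 i)
    _ ≤ cost c p x z θ₁ + cost c p z y θ₂ := by
        rw [cost, cost]
        exact add_le_add (Real.rpow_le_rpow hap0 hSa hinv0)
          (Real.rpow_le_rpow hbp0 hSb hinv0)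

/-- For any finite sequences `x, y, z` of points in a metric space, any
`c > 0` and any `1 ≤ p < ∞`, the SOSPA distance satisfies the triangle inequality. -/
theorem dSOSPA_triangle {E : Type*} [MetricSpace E] (c p : ℝ) (hc : 0 < c) (hp : 1 ≤ p)
    (x y z : Polyline E) :
    dSOSPA c p x y ≤ dSOSPA c p x z + dSOSPA c p z y := by
  classical
  haveI hne1 : Nonempty {θ : Finset (Fin x.1 × Fin z.1) // IsOrderedAssignment θ} :=
    ⟨⟨∅, by intro a ha; exact absurd ha (Finset.notMem_empty a)⟩⟩
  haveI hne2 : Nonempty {θ : Finset (Fin z.1 × Fin y.1) // IsOrderedAssignment θ} :=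
    ⟨⟨∅, by intro a ha; exact absurd ha (Finset.notMem_empty a)⟩⟩
  obtain ⟨θ₁, hθ₁⟩ := Finite.exists_min
    (fun θ : {θ : Finset (Fin x.1 × Fin z.1) // IsOrderedAssignment θ} => cost c p x z θ.1)
  obtain ⟨θ₂, hθ₂⟩ := Finite.exists_min
    (fun θ : {θ : Finset (Fin z.1 × Fin y.1) // IsOrderedAssignment θ} => cost c p z y θ.1)
  have h1 : dSOSPA c p x z = cost c p x z θ₁.1 :=
    le_antisymm (ciInf_le (Set.Finite.bddBelow (Set.finite_range _)) θ₁) (le_ciInf hθ₁)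
  have h2 : dSOSPA c p z y = cost c p z y θ₂.1 :=
    le_antisymm (ciInf_le (Set.Finite.bddBelow (Set.finite_range _)) θ₂) (le_ciInf hθ₂)
  have hcomp : IsOrderedAssignment (composeAssignment θ₁.1 θ₂.1) :=
    composeAssignment_ordered θ₁.2 θ₂.2
  have h3 : dSOSPA c p x y ≤ cost c p x y (composeAssignment θ₁.1 θ₂.1) :=
    ciInf_le (Set.Finite.bddBelow (Set.finite_range _))
      (⟨composeAssignment θ₁.1 θ₂.1, hcomp⟩ :
        {θ : Finset (Fin x.1 × Fin y.1) // IsOrderedAssignment θ})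
  calc dSOSPA c p x y ≤ cost c p x y (composeAssignment θ₁.1 θ₂.1) := h3
    _ ≤ cost c p x z θ₁.1 + cost c p z y θ₂.1 :=
        cost_compose_le c p hc hp x z y θ₁.1 θ₂.1 θ₁.2 θ₂.2
    _ = dSOSPA c p x z + dSOSPA c p z y := by rw [h1, h2]
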